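/- Let G be a connected graph. A set S ⊆ V(G) is a general position set if and only if: (i) the subgraph induced by S is a disjoint union of complete graphs Q_1,…,Q_ℓ; (ii) Q_i and Q_j are parallel for all i ≠ j; and (iii) d_G(Q_i,Q_j) + d_G(Q_j,Q_k) ≠ d_G(Q_i,Q_k) for all distinct i,j,k. -/
import Mathlib


/-- `S` is a general `d`-position set of `G`: no three distinct vertices of `S`
lie on a common geodesic of length at most `d`. -/
def IsGenDPos {V : Type*} (G : SimpleGraph V) (d : ℕ) (S : Set V) : Prop :=
  ∀ ⦃u v w : V⦄, u ∈ S → v ∈ S → w ∈ S → u ≠ v → u ≠ w → v ≠ w →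
    G.dist u v + G.dist v w = G.dist u w → G.dist u w ≤ d → False

/-- The general `d`-position number of `G`. -/
noncomputable def gpNum {V : Type*} (G : SimpleGraph V) (d : ℕ) : ℕ :=
  sSup {n | ∃ S : Set V, IsGenDPos G d S ∧ S.ncard = n}

/-- Distance between two sets of vertices. -/
noncomputable def setDist {V : Type*} (G : SimpleGraph V) (A B : Set V) : ℕ :=
  sInf {n | ∃ a ∈ A, ∃ b ∈ B, G.dist a b = n}

/-- Two vertex sets are parallel if all pairs realize the set distance. -/
def Parallel {V : Type*} (G : SimpleGraph V) (A B : Set V) : Prop :=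
  ∀ a ∈ A, ∀ b ∈ B, G.dist a b = setDist G A B

/-- A general position set: no three distinct vertices lie on a common geodesic. -/
def IsGenPos {V : Type*} (G : SimpleGraph V) (S : Set V) : Prop :=
  ∀ ⦃u v w : V⦄, u ∈ S → v ∈ S → w ∈ S → u ≠ v → u ≠ w → v ≠ w →
    G.dist u v + G.dist v w = G.dist u w → False

/-- Characterization of general position sets (Anand et al.): S is a general
position set iff the induced subgraph is a disjoint union of cliques which are
pairwise parallel and whose set distances satisfy no triangle equality. -/
theorem stmt_9 {V : Type*} [Finite V] (G : SimpleGraph V) (hG : G.Connected) (S : Set V) :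
    IsGenPos G S ↔
      ∃ (ℓ : ℕ) (Q : Fin ℓ → Set V),
        (∀ i, (Q i).Nonempty) ∧
        (∀ i j, i ≠ j → Disjoint (Q i) (Q j)) ∧
        (⋃ i, Q i) = S ∧
        (∀ i, G.IsClique (Q i)) ∧
        (∀ i j, i ≠ j → ∀ a ∈ Q i, ∀ b ∈ Q j, ¬ G.Adj a b) ∧
        (∀ i j, i ≠ j → Parallel G (Q i) (Q j)) ∧
        (∀ i j k, i ≠ j → i ≠ k → j ≠ k →
          setDist G (Q i) (Q j) + setDist G (Q j) (Q k) ≠ setDist G (Q i) (Q k)) := by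
  classical
  constructor
  · intro hS
    -- key monotonicity lemma
    have key : ∀ a a' b : V, a ∈ S → a' ∈ S → b ∈ S → ((a : V) = a' ∨ G.Adj a a') →
        a ≠ b → a' ≠ b → G.dist a b ≤ G.dist a' b := by
      intro a a' b ha ha' hb hrel hab ha'b
      rcases hrel with rfl | hadj
      · exact le_rfl
      by_contra hlt
      push_neg at hlt
      have h1 : G.dist a b ≤ G.dist a a' + G.dist a' b := hG.dist_triangle
      have hda : G.dist a a' = 1 := SimpleGraph.dist_eq_one_iff_adj.mpr hadj
      have heq : G.dist a a' + G.dist a' b = G.dist a b := by omega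
      exact hS ha ha' hb hadj.ne hab ha'b heq
    -- the setoid of "equal or adjacent" on S
    letI s : Setoid S := ⟨fun a b => (a : V) = b ∨ G.Adj a b, by
      constructor
      · intro a; exact Or.inl rfl
      · intro a b h
        rcases h with h | h
        · exact Or.inl h.symm
        · exact Or.inr h.symm
      · intro a b c h1 h2
        rcases h1 with h1 | h1
        · rwa [h1]
        rcases h2 with h2 | h2
        · rw [← h2]; exact Or.inr h1
        by_cases hac : (a : V) = c
        · exact Or.inl hac
        right
        by_contra hnadj
        have hd1 : G.dist (a : V) b = 1 := SimpleGraph.dist_eq_one_iff_adj.mpr h1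
        have hd2 : G.dist (b : V) c = 1 := SimpleGraph.dist_eq_one_iff_adj.mpr h2
        have htr : G.dist (a : V) c ≤ G.dist (a : V) b + G.dist (b : V) c := hG.dist_triangle
        have hpos : 0 < G.dist (a : V) c := hG.pos_dist_of_ne hac
        have hne1 : G.dist (a : V) c ≠ 1 := fun h => hnadj (SimpleGraph.dist_eq_one_iff_adj.mp h)
        have heq : G.dist (a : V) b + G.dist (b : V) c = G.dist (a : V) c := by omega
        exact hS a.2 b.2 c.2 h1.ne hac h2.ne heq⟩
    haveI : Fintype (Quotient s) := Fintype.ofFinite _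
    set ℓ := Fintype.card (Quotient s) with hℓ
    let e : Quotient s ≃ Fin ℓ := Fintype.equivFin _
    let Q : Fin ℓ → Set V := fun i => {v | ∃ h : v ∈ S, e (Quotient.mk s ⟨v, h⟩) = i}
    have hQsub : ∀ i, Q i ⊆ S := fun i v hv => hv.1
    -- vertices in the same part are equal or adjacent
    have hsame : ∀ i, ∀ a ∈ Q i, ∀ b ∈ Q i, (a : V) = b ∨ G.Adj a b := by
      intro i a ha b hb
      obtain ⟨ha', hqa⟩ := ha
      obtain ⟨hb', hqb⟩ := hb
      have : Quotient.mk s ⟨a, ha'⟩ = Quotient.mk s ⟨b, hb'⟩ := e.injective (hqa.trans hqb.symm)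
      exact Quotient.exact this
    -- vertices in different parts are distinct
    have hcross_ne : ∀ i j, i ≠ j → ∀ a ∈ Q i, ∀ b ∈ Q j, a ≠ b := by
      intro i j hij a ha b hb hab
      obtain ⟨ha', hqa⟩ := ha
      obtain ⟨hb', hqb⟩ := hb
      subst hab
      have : (⟨a, ha'⟩ : S) = ⟨a, hb'⟩ := rfl
      rw [this] at hqa
      exact hij (hqa.symm.trans hqb)
    -- pairwise nonadjacency across parts
    have hnadj : ∀ i j, i ≠ j → ∀ a ∈ Q i, ∀ b ∈ Q j, ¬ G.Adj a b := by
      intro i j hij a ha b hb hadj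
      obtain ⟨ha', hqa⟩ := ha
      obtain ⟨hb', hqb⟩ := hb
      have : Quotient.mk s ⟨a, ha'⟩ = Quotient.mk s ⟨b, hb'⟩ := Quotient.sound (Or.inr hadj)
      rw [this] at hqa
      exact hij (hqa.symm.trans hqb)
    -- constancy of distances between two parts
    have hconst : ∀ i j, i ≠ j → ∀ a ∈ Q i, ∀ b ∈ Q j, ∀ a' ∈ Q i, ∀ b' ∈ Q j,
        G.dist a b = G.dist a' b' := by
      intro i j hij a ha b hb a' ha' b' hb'
      have h1 : G.dist a b = G.dist a' b := by
        apply le_antisymm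
        · exact key a a' b (hQsub i ha) (hQsub i ha') (hQsub j hb)
            (hsame i a ha a' ha') (hcross_ne i j hij a ha b hb)
            (hcross_ne i j hij a' ha' b hb)
        · exact key a' a b (hQsub i ha') (hQsub i ha) (hQsub j hb)
            (hsame i a' ha' a ha) (hcross_ne i j hij a' ha' b hb)
            (hcross_ne i j hij a ha b hb)
      have h2 : G.dist a' b = G.dist a' b' := by
        rw [SimpleGraph.dist_comm, SimpleGraph.dist_comm (u := a') (v := b')]
        apply le_antisymm
        · exact key b b' a' (hQsub j hb) (hQsub j hb') (hQsub i ha')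
            (hsame j b hb b' hb') (fun h => hcross_ne i j hij a' ha' b hb h.symm)
            (fun h => hcross_ne i j hij a' ha' b' hb' h.symm)
        · exact key b' b a' (hQsub j hb') (hQsub j hb) (hQsub i ha')
            (hsame j b' hb' b hb) (fun h => hcross_ne i j hij a' ha' b' hb' h.symm)
            (fun h => hcross_ne i j hij a' ha' b hb h.symm)
      exact h1.trans h2
    -- nonemptiness
    have hne : ∀ i, (Q i).Nonempty := by
      intro i
      obtain ⟨x, hx⟩ := (e.symm i).exists_rep
      refine ⟨x.1, x.2, ?_⟩
      have : (⟨x.1, x.2⟩ : S) = x := rfl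
      rw [this, hx, e.apply_symm_apply]
    -- parallelism
    have hpar : ∀ i j, i ≠ j → Parallel G (Q i) (Q j) := by
      intro i j hij a ha b hb
      have hmem : G.dist a b ∈ {n | ∃ a ∈ Q i, ∃ b ∈ Q j, G.dist a b = n} := ⟨a, ha, b, hb, rfl⟩
      obtain ⟨a', ha', b', hb', hd⟩ := Nat.sInf_mem (Set.nonempty_of_mem hmem)
      rw [setDist, ← hd]
      exact hconst i j hij a ha b hb a' ha' b' hb'
    refine ⟨ℓ, Q, hne, ?_, ?_, ?_, hnadj, hpar, ?_⟩
    · -- disjoint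
      intro i j hij
      rw [Set.disjoint_left]
      intro v hvi hvj
      exact hcross_ne i j hij v hvi v hvj rfl
    · -- union
      ext v
      simp only [Set.mem_iUnion]
      constructor
      · rintro ⟨i, hi⟩; exact hQsub i hi
      · intro hv; exact ⟨e (Quotient.mk s ⟨v, hv⟩), hv, rfl⟩
    · -- cliques
      intro i a ha b hb hab
      rcases hsame i a ha b hb with h | h
      · exact absurd h hab
      · exact h
    · -- no triangle equality
      intro i j k hij hik hjk heq
      obtain ⟨a, ha⟩ := hne i
      obtain ⟨b, hb⟩ := hne j
      obtain ⟨c, hc⟩ := hne k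
      have d1 : G.dist a b = setDist G (Q i) (Q j) := hpar i j hij a ha b hb
      have d2 : G.dist b c = setDist G (Q j) (Q k) := hpar j k hjk b hb c hc
      have d3 : G.dist a c = setDist G (Q i) (Q k) := hpar i k hik a ha c hc
      exact hS (hQsub i ha) (hQsub j hb) (hQsub k hc)
        (hcross_ne i j hij a ha b hb) (hcross_ne i k hik a ha c hc)
        (hcross_ne j k hjk b hb c hc) (by omega)
  · rintro ⟨ℓ, Q, hne, hdisj, hunion, hclq, hnadj, hpar, htri⟩
    intro u v w hu hv hw huv huw hvw heq
    rw [← hunion] at hu hv hw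
    obtain ⟨iu, hui⟩ := Set.mem_iUnion.mp hu
    obtain ⟨iv, hvi⟩ := Set.mem_iUnion.mp hv
    obtain ⟨iw, hwi⟩ := Set.mem_iUnion.mp hw
    by_cases h1 : iu = iv
    · subst h1
      have duv : G.dist u v = 1 := SimpleGraph.dist_eq_one_iff_adj.mpr (hclq iu hui hvi huv)
      by_cases h2 : iu = iw
      · subst h2
        have duw : G.dist u w = 1 := SimpleGraph.dist_eq_one_iff_adj.mpr (hclq iu hui hwi huw)
        have dvw : G.dist v w = 1 := SimpleGraph.dist_eq_one_iff_adj.mpr (hclq iu hvi hwi hvw)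
        omega
      · have dvw : G.dist v w = setDist G (Q iu) (Q iw) := hpar iu iw h2 v hvi w hwi
        have duw : G.dist u w = setDist G (Q iu) (Q iw) := hpar iu iw h2 u hui w hwi
        omega
    · by_cases h2 : iu = iw
      · subst h2
        have duw : G.dist u w = 1 := SimpleGraph.dist_eq_one_iff_adj.mpr (hclq iu hui hwi huw)
        have hpos : 0 < G.dist u v := hG.pos_dist_of_ne huv
        have hne1 : G.dist u v ≠ 1 := fun h =>
          hnadj iu iv h1 u hui v hvi (SimpleGraph.dist_eq_one_iff_adj.mp h)
        have hpos' : 0 < G.dist v w := hG.pos_dist_of_ne hvw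
        omega
      · by_cases h3 : iv = iw
        · subst h3
          have dvw : G.dist v w = 1 := SimpleGraph.dist_eq_one_iff_adj.mpr (hclq iv hvi hwi hvw)
          have duv : G.dist u v = setDist G (Q iu) (Q iv) := hpar iu iv h1 u hui v hvi
          have duw : G.dist u w = setDist G (Q iu) (Q iv) := hpar iu iv h1 u hui w hwi
          omega
        · have duv : G.dist u v = setDist G (Q iu) (Q iv) := hpar iu iv h1 u hui v hvi
          have dvw : G.dist v w = setDist G (Q iv) (Q iw) := hpar iv iw h3 v hvi w hwi
          have duw : G.dist u w = setDist G (Q iu) (Q iw) := hpar iu iw h2 u hui w hwi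
          exact htri iu iv iw h1 h2 h3 (by omega)
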